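/- Construction A (compressed two-server code): for every integer K ≥ 1 there exists a (2,K) PIR scheme (with binary messages, L = 1 bit) whose storage cost α and download cost β satisfy α ≤ K − 1/2 and β ≤ (2^K − 1)/2^K. -/

import Mathlib

/- Shannon entropy framework for finitely-valued random variables on a finite
probability space, and the definition of an (N,K) private information retrieval
(PIR) scheme. -/

open scoped Classical
open Finset

/-- `prob p X a` is the probability that the random variable `X` takes the value `a`,
where `p` is the probability mass function on the finite sample space `Ω`. -/
noncomputable def prob {Ω α : Type} [Fintype Ω] (p : Ω → ℝ) (X : Ω → α) (a : α) : ℝ :=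
  ∑ ω : Ω, if X ω = a then p ω else 0

/-- Shannon entropy (natural base) of a random variable `X` on a finite sample space. -/
noncomputable def ent {Ω α : Type} [Fintype Ω] (p : Ω → ℝ) (X : Ω → α) : ℝ :=
  ∑ a ∈ Finset.univ.image X, Real.negMulLog (prob p X a)

/-- Conditional Shannon entropy `H(X | Y) = H(X, Y) - H(Y)`. -/
noncomputable def condEnt {Ω α β : Type} [Fintype Ω] (p : Ω → ℝ) (X : Ω → α) (Y : Ω → β) : ℝ :=
  ent p (fun ω => (X ω, Y ω)) - ent p Y

/-- An `(N, K)` private information retrieval scheme: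
`K` mutually independent messages `W` with entropy `L` each, stored contents `S` at `N`
servers (deterministic functions of the messages), a random key `F` independent of the
messages, queries `Q` (deterministic functions of `F`), answers `A` (deterministic
functions of the query and the stored content, with an answer function not depending on
the desired index), correctness and privacy. Messages/servers are indexed `0, …, K-1`
and `0, …, N-1` (paper index `i` corresponds to index `i - 1` here). -/
structure PIRScheme (N K : ℕ) where
  Ω : Type
  [finΩ : Fintype Ω]
  Msg : Type
  Sto : Type
  Qry : Type
  Ans : Type
  Key : Type
  p : Ω → ℝ
  p_nonneg : ∀ ω, 0 ≤ p ω
  p_sum : ∑ ω : Ω, p ω = 1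
  L : ℝ
  L_pos : 0 < L
  W : Fin K → Ω → Msg
  S : Fin N → Ω → Sto
  F : Ω → Key
  Q : Fin K → Fin N → Ω → Qry
  A : Fin K → Fin N → Ω → Ans
  W_indep : ∀ w : Fin K → Msg,
    prob p (fun ω => (fun k => W k ω)) w = ∏ k : Fin K, prob p (W k) (w k)
  W_ent : ∀ k, ent p (W k) = L
  F_indep : ∀ (f : Key) (w : Fin K → Msg),
    prob p (fun ω => (F ω, fun k => W k ω)) (f, w)
      = prob p F f * prob p (fun ω => (fun k => W k ω)) w
  S_det : ∀ n : Fin N, ∃ g : (Fin K → Msg) → Sto, ∀ ω, S n ω = g (fun k => W k ω)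
  Q_det : ∀ (k : Fin K) (n : Fin N), ∃ g : Key → Qry, ∀ ω, Q k n ω = g (F ω)
  A_det : ∀ n : Fin N, ∃ φ : Qry → Sto → Ans, ∀ (k : Fin K) (ω : Ω), A k n ω = φ (Q k n ω) (S n ω)
  correct : ∀ k : Fin K, ∃ g : (Fin N → Ans) → (Fin N → Qry) → Msg,
    ∀ ω, W k ω = g (fun n => A k n ω) (fun n => Q k n ω)
  privacy : ∀ (n : Fin N) (k k' : Fin K) (q : Qry),
    prob p (Q k n) q = prob p (Q k' n) q

attribute [instance] PIRScheme.finΩ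

/-- The set of server (or message) indices `{i : i < m}`, i.e. paper indices `1, …, m`. -/
def finLt (N m : ℕ) : Finset (Fin N) := Finset.univ.filter (fun i => i.val < m)

/-- The set of server (or message) indices `{i : m ≤ i}`, i.e. paper indices `m+1, …, N`. -/
def finGe (N m : ℕ) : Finset (Fin N) := Finset.univ.filter (fun i => m ≤ i.val)

namespace PIRScheme

variable {N K : ℕ}

/-- Informational normalized storage cost `α = (1/(N L)) ∑ₙ H(Sₙ)`. -/
noncomputable def alpha (s : PIRScheme N K) : ℝ :=
  (1 / (N * s.L)) * ∑ n : Fin N, ent s.p (s.S n)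

/-- Informational normalized download cost for desired message `k`:
`(1/(N L)) ∑ₙ H(Aₙ^[k] | Q₁^[k], …, Q_N^[k])`.  The download cost `β` of the scheme is
`betaAt` at the first message. -/
noncomputable def betaAt (s : PIRScheme N K) (k : Fin K) : ℝ :=
  (1 / (N * s.L)) *
    ∑ n : Fin N, condEnt s.p (s.A k n) (fun ω => (fun n' : Fin N => s.Q k n' ω))

/-- The joint random variable `S_B = (Sₙ : n ∈ B)`. -/
noncomputable def jointS (s : PIRScheme N K) (B : Finset (Fin N)) : s.Ω → (B → s.Sto) :=
  fun ω i => s.S i.1 ω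

/-- The joint random variable `A_B^[k] = (Aₙ^[k] : n ∈ B)`. -/
noncomputable def jointA (s : PIRScheme N K) (k : Fin K) (B : Finset (Fin N)) :
    s.Ω → (B → s.Ans) :=
  fun ω i => s.A k i.1 ω

/-- The joint random variable `W_C = (Wₖ : k ∈ C)`. -/
noncomputable def jointW (s : PIRScheme N K) (C : Finset (Fin K)) : s.Ω → (C → s.Msg) :=
  fun ω i => s.W i.1 ω

/-- A scheme is symmetric if
`H(S_A, A_B^[k] | F, W_C) = H(S_{π(A)}, A_{π(B)}^[π'(k)] | F, W_{π'(C)})` for all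
permutations `π` of the servers and `π'` of the messages. -/
def Symmetric (s : PIRScheme N K) : Prop :=
  ∀ (A B : Finset (Fin N)) (C : Finset (Fin K)) (k : Fin K)
    (π : Equiv.Perm (Fin N)) (π' : Equiv.Perm (Fin K)),
    condEnt s.p (fun ω => (s.jointS A ω, s.jointA k B ω)) (fun ω => (s.F ω, s.jointW C ω))
      = condEnt s.p (fun ω => (s.jointS (A.image ⇑π) ω, s.jointA (π' k) (B.image ⇑π) ω))
          (fun ω => (s.F ω, s.jointW (C.image ⇑π') ω))

end PIRScheme


namespace ConstructionA

abbrev V (K : ℕ) := Fin K → ZMod 2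

variable {K : ℕ}

noncomputable def par (v : V K) : ZMod 2 := ∑ j, v j

def dlt (k : Fin K) : V K := fun j => if j = k then 1 else 0

noncomputable def dot (u s : V K) : ZMod 2 := ∑ j, u j * s j

noncomputable def qq (k : Fin K) (n : Fin 2) (v : V K) : V K :=
  fun j => v j + ((n.val : ZMod 2) + 1 + par v) * dlt k j

def sto1 [NeZero K] (m : V K) : V K := fun j => m 0 + m j

lemma zmod2_cases : ∀ x : ZMod 2, x = 0 ∨ x = 1 := by decide

lemma zmod2_ne_iff : ∀ x y : ZMod 2, (¬ x = y) ↔ x = y + 1 := by decide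

lemma dot_dlt (k : Fin K) (m : V K) : dot (dlt k) m = m k := by
  simp [dot, dlt, Finset.sum_ite_eq]

lemma dot_add_right (t : V K) (m m' : V K) :
    dot t (m + m') = dot t m + dot t m' := by
  simp [dot, Pi.add_apply, mul_add, Finset.sum_add_distrib]

lemma dot_dlt_right (t : V K) (k : Fin K) : dot t (dlt k) = t k := by
  simp [dot, dlt, mul_ite, Finset.sum_ite_eq]

lemma dlt_ne_zero (k : Fin K) : dlt k ≠ 0 := by
  intro h
  have := congrFun h k
  simp [dlt] at this

lemma par_dlt (k : Fin K) : par (dlt k) = 1 := by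
  simp [par, dlt, Finset.sum_ite_eq]

lemma par_add (x y : V K) : par (x + y) = par x + par y := by
  simp [par, Finset.sum_add_distrib]

lemma par_eq_dot_one (v : V K) : par v = dot (fun _ => 1) v := by
  simp [par, dot]

lemma one_ne_zero_V (hK : 1 ≤ K) : (fun _ : Fin K => (1 : ZMod 2)) ≠ (0 : V K) := by
  intro h
  have := congrFun h ⟨0, hK⟩
  simp at this

lemma par_ne_zero_ne (v : V K) (h : par v ≠ 0) : v ≠ 0 := by
  intro h0
  subst h0
  simp [par] at h

lemma card_V : Fintype.card (V K) = 2 ^ K := by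
  simp [Fintype.card_fun]

lemma card_dot_fiber (t : V K) (ht : t ≠ 0) (b : ZMod 2) :
    2 * (univ.filter (fun m : V K => dot t m = b)).card = 2 ^ K := by
  obtain ⟨j0, hj0⟩ : ∃ j0, t j0 ≠ 0 := by
    by_contra h
    push_neg at h
    exact ht (funext fun j => h j)
  have hj1 : t j0 = 1 := by
    rcases zmod2_cases (t j0) with h | h
    · exact absurd h hj0
    · exact h
  have hself : ∀ x : V K, x + x = 0 := by
    intro x
    funext j
    exact (by decide : ∀ y : ZMod 2, y + y = 0) _
  have hdot : ∀ m : V K, dot t (m + dlt j0) = dot t m + 1 := by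
    intro m
    rw [dot_add_right, dot_dlt_right, hj1]
  have key :
      (univ.filter (fun m : V K => dot t m = b)).card
        = (univ.filter (fun m : V K => dot t m = b + 1)).card := by
    apply Finset.card_bij (fun m _ => m + dlt j0)
    · intro m hm
      simp only [mem_filter, mem_univ, true_and] at hm ⊢
      rw [hdot, hm]
    · intro m₁ h₁ m₂ h₂ h
      have := congrArg (fun x => x + dlt j0) h
      simpa [add_assoc, hself] using this
    · intro m hm
      refine ⟨m + dlt j0, ?_, by simp [add_assoc, hself]⟩
      simp only [mem_filter, mem_univ, true_and] at hm ⊢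
      rw [hdot, hm, add_assoc]
      have h2 : (1 : ZMod 2) + 1 = 0 := by decide
      rw [h2, add_zero]
  have hsplit :
      (univ.filter (fun m : V K => dot t m = b)).card
        + (univ.filter (fun m : V K => dot t m = b + 1)).card = 2 ^ K := by
    have hpart := Finset.card_filter_add_card_filter_not
      (s := (univ : Finset (V K))) (p := fun m : V K => dot t m = b)
    have hneg : (univ.filter (fun m : V K => ¬ dot t m = b))
        = (univ.filter (fun m : V K => dot t m = b + 1)) := by
      apply Finset.filter_congr
      intro m _
      simpa using (zmod2_ne_iff (dot t m) b)
    rw [hneg] at hpart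
    rw [hpart, ← Fintype.card, card_V]
  omega

lemma par_qq (k : Fin K) (n : Fin 2) (v : V K) :
    par (qq k n v) = (n.val : ZMod 2) + 1 := by
  have : par (qq k n v) = par v + ((n.val : ZMod 2) + 1 + par v) * par (dlt k) := by
    simp [qq, par, Finset.sum_add_distrib, Finset.mul_sum]
  rw [this, par_dlt, mul_one]
  generalize par v = p
  generalize ((n.val : ZMod 2)) = x
  revert p x
  decide

lemma qq_zero_add_dlt (k : Fin K) (v : V K) :
    qq k 1 v = qq k 0 v + dlt k := by
  funext j
  simp only [qq, Pi.add_apply]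
  generalize par v = p
  generalize dlt k j = d
  generalize v j = x
  revert p d x
  decide

lemma qq_fiber (k : Fin K) (n : Fin 2) (q : V K) :
    univ.filter (fun v : V K => qq k n v = q)
      = if par q = (n.val : ZMod 2) + 1 then ({q, q + dlt k} : Finset (V K)) else ∅ := by
  split_ifs with hq
  · ext v
    simp only [mem_filter, mem_univ, true_and, mem_insert, mem_singleton]
    constructor
    · intro h
      rcases zmod2_cases ((n.val : ZMod 2) + 1 + par v) with hc | hc
      · left
        rw [← h]
        funext j
        simp [qq, hc]
      · right
        rw [← h]
        funext j
        simp only [qq, Pi.add_apply, hc, one_mul]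
        generalize dlt k j = d
        generalize v j = x
        revert d x
        decide
    · intro h
      rcases h with h | h
      · subst h
        have hc : ((n.val : ZMod 2) + 1 + par v) = 0 := by
          rw [hq]
          generalize ((n.val : ZMod 2)) = x
          revert x
          decide
        funext j
        simp [qq, hc]
      · subst h
        have hpv : par (q + dlt k) = par q + 1 := by rw [par_add, par_dlt]
        have hc : ((n.val : ZMod 2) + 1 + par (q + dlt k)) = 1 := by
          rw [hpv, hq]
          generalize ((n.val : ZMod 2)) = x
          revert x
          decide
        funext j
        simp only [qq, hc, one_mul, Pi.add_apply]
        generalize dlt k j = d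
        generalize q j = x
        revert d x
        decide
  · ext v
    simp only [mem_filter, mem_univ, true_and, notMem_empty, iff_false]
    intro h
    exact hq (by rw [← h, par_qq])

lemma qq_fiber_card (k : Fin K) (n : Fin 2) (q : V K) :
    (univ.filter (fun v : V K => qq k n v = q)).card
      = if par q = (n.val : ZMod 2) + 1 then 2 else 0 := by
  rw [qq_fiber]
  split_ifs
  · rw [Finset.card_pair]
    intro h
    have := congrFun h k
    simp only [Pi.add_apply, dlt, if_pos rfl] at this
    revert this
    generalize q k = x
    revert x
    decide
  · simp

lemma sto1_fiber [NeZero K] (t : V K) :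
    univ.filter (fun m : V K => sto1 m = t)
      = if t 0 = 0 then ({t, t + 1} : Finset (V K)) else ∅ := by
  split_ifs with ht
  · ext m
    simp only [mem_filter, mem_univ, true_and, mem_insert, mem_singleton]
    constructor
    · intro h
      rcases zmod2_cases (m 0) with h0 | h0
      · left
        rw [← h]
        funext j
        simp [sto1, h0]
      · right
        rw [← h]
        funext j
        simp only [sto1, Pi.add_apply, Pi.one_apply, h0]
        generalize m j = x
        revert x
        decide
    · intro h
      rcases h with h | h
      · subst h
        funext j
        simp [sto1, ht]
      · subst h
        funext j
        simp only [sto1, Pi.add_apply, Pi.one_apply, ht]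
        generalize t j = x
        revert x
        decide
  · ext m
    simp only [mem_filter, mem_univ, true_and, notMem_empty, iff_false]
    intro h
    apply ht
    have := congrFun h 0
    simp only [sto1] at this
    rw [← this]
    generalize m 0 = x
    revert x
    decide

lemma sto1_fiber_card [NeZero K] (t : V K) :
    (univ.filter (fun m : V K => sto1 m = t)).card = if t 0 = 0 then 2 else 0 := by
  rw [sto1_fiber]
  split_ifs
  · rw [Finset.card_pair]
    intro h
    have := congrFun h 0
    simp only [Pi.add_apply, Pi.one_apply] at this
    revert this
    generalize t 0 = x
    revert x
    decide
  · simp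

lemma dot_qq_left (k : Fin K) (n : Fin 2) (v m : V K) :
    dot (qq k n v) m = dot v m + ((n.val : ZMod 2) + 1 + par v) * m k := by
  have hd : (∑ i : Fin K, dlt k i * m i) = m k := by
    simp [dlt, ite_mul, Finset.sum_ite_eq]
  simp only [dot, qq, add_mul, Finset.sum_add_distrib, mul_assoc, ← Finset.mul_sum, hd]

lemma dot_sto1 [NeZero K] (w m : V K) :
    dot w (sto1 m) = par w * m 0 + dot w m := by
  simp only [dot, sto1, mul_add, Finset.sum_add_distrib, par, ← Finset.sum_mul]

lemma correct_id [NeZero K] (k : Fin K) (v m : V K) :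
    dot (qq k 0 v) m + dot (qq k 1 v) (sto1 m) = m k := by
  have hp1 : par (qq k 1 v) = 0 := by
    rw [par_qq]
    decide
  rw [dot_sto1, hp1, zero_mul, zero_add, dot_qq_left, dot_qq_left]
  simp only [Fin.val_zero, Fin.val_one, Nat.cast_zero, Nat.cast_one, zero_add]
  generalize dot v m = a
  generalize par v = p
  generalize m k = x
  revert a p x
  decide

end ConstructionA

namespace ConstructionA

section ProbLayer

lemma prob_const {Ω α : Type} [Fintype Ω] (c : ℝ) (X : Ω → α) (a : α) :
    prob (fun _ => c) X a = ((univ.filter (fun ω => X ω = a)).card : ℝ) * c := by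
  rw [prob, ← Finset.sum_filter, Finset.sum_const, nsmul_eq_mul]

lemma card_filter_prod {α β : Type} [Fintype α] [Fintype β]
    (P : α → Prop) (Q : β → Prop) [DecidablePred P] [DecidablePred Q] :
    (univ.filter (fun ω : α × β => P ω.1 ∧ Q ω.2)).card
      = (univ.filter P).card * (univ.filter Q).card := by
  rw [← Finset.card_product, ← Finset.filter_product]
  congr 1

lemma ent_eq_sum_univ {Ω α : Type} [Fintype Ω] [Fintype α] (p : Ω → ℝ) (X : Ω → α) :
    ent p X = ∑ a : α, Real.negMulLog (prob p X a) := by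
  rw [ent]
  apply Finset.sum_subset (Finset.subset_univ _)
  intro a _ ha
  have h0 : prob p X a = 0 := by
    rw [prob]
    apply Finset.sum_eq_zero
    intro ω _
    rw [if_neg]
    intro h
    exact ha (Finset.mem_image.mpr ⟨ω, Finset.mem_univ _, h⟩)
  rw [h0, Real.negMulLog_zero]

variable {K : ℕ}

/-- The uniform pmf on `V K × V K`. -/
noncomputable def pm (K : ℕ) : V K × V K → ℝ := fun _ => ((2:ℝ)^K)⁻¹ * ((2:ℝ)^K)⁻¹

lemma two_pow_ne (K : ℕ) : ((2:ℝ)^K) ≠ 0 := by positivity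

lemma prob_split {α : Type} (X : V K × V K → α) (a : α)
    (P : V K → Prop) (Q : V K → Prop) [DecidablePred P] [DecidablePred Q]
    (h : ∀ ω : V K × V K, X ω = a ↔ P ω.1 ∧ Q ω.2) :
    prob (pm K) X a
      = ((univ.filter P).card : ℝ) * ((univ.filter Q).card : ℝ)
          * (((2:ℝ)^K)⁻¹ * ((2:ℝ)^K)⁻¹) := by
  rw [show pm K = fun _ : V K × V K => (((2:ℝ)^K)⁻¹ * ((2:ℝ)^K)⁻¹) from rfl, prob_const]
  have : (univ.filter (fun ω : V K × V K => X ω = a))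
      = (univ.filter (fun ω : V K × V K => P ω.1 ∧ Q ω.2)) := by
    apply Finset.filter_congr
    intro ω _
    exact h ω
  rw [this, card_filter_prod]
  push_cast
  ring

lemma rcard_true : (((univ : Finset (V K)).filter (fun _ => True)).card : ℝ) = (2:ℝ)^K := by
  rw [Finset.filter_true, Finset.card_univ, card_V]
  push_cast
  ring

lemma rcard_eq (w : V K) :
    (((univ : Finset (V K)).filter (fun m => m = w)).card : ℝ) = 1 := by
  rw [Finset.filter_eq', if_pos (Finset.mem_univ _), Finset.card_singleton]
  norm_num

lemma rcard_dot (t : V K) (ht : t ≠ 0) (b : ZMod 2) :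
    (((univ : Finset (V K)).filter (fun m => dot t m = b)).card : ℝ) = (2:ℝ)^K / 2 := by
  have h := card_dot_fiber t ht b
  have h2 : ((2 * (univ.filter (fun m : V K => dot t m = b)).card : ℕ) : ℝ)
      = ((2^K : ℕ) : ℝ) := by rw [h]
  push_cast at h2
  linarith

lemma rcard_coord (k : Fin K) (a : ZMod 2) :
    (((univ : Finset (V K)).filter (fun m => m k = a)).card : ℝ) = (2:ℝ)^K / 2 := by
  have : ((univ : Finset (V K)).filter (fun m => m k = a))
      = ((univ : Finset (V K)).filter (fun m => dot (dlt k) m = a)) := by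
    apply Finset.filter_congr
    intro m _
    rw [dot_dlt]
  rw [this, rcard_dot _ (dlt_ne_zero k)]

lemma rcard_par [NeZero K] :
    (((univ : Finset (V K)).filter (fun v => par v = 1)).card : ℝ) = (2:ℝ)^K / 2 := by
  have : ((univ : Finset (V K)).filter (fun v => par v = 1))
      = ((univ : Finset (V K)).filter (fun v => dot (fun _ => 1) v = 1)) := by
    apply Finset.filter_congr
    intro v _
    rw [par_eq_dot_one]
  rw [this, rcard_dot _ (one_ne_zero_V (Nat.one_le_iff_ne_zero.mpr (NeZero.ne K)))]

-- prob of a single message bit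
lemma probW [NeZero K] (k : Fin K) (a : ZMod 2) :
    prob (pm K) (fun ω : V K × V K => ω.1 k) a = 1/2 := by
  rw [prob_split _ _ (fun m => m k = a) (fun _ => True) (fun ω => by simp)]
  rw [rcard_coord, rcard_true]
  field_simp

lemma probWvec (w : V K) :
    prob (pm K) (fun ω : V K × V K => (fun k : Fin K => ω.1 k)) w = ((2:ℝ)^K)⁻¹ := by
  rw [prob_split _ _ (fun m => m = w) (fun _ => True) (fun ω => by simp)]
  rw [rcard_eq, rcard_true]
  field_simp

lemma probF (f : V K) :
    prob (pm K) (fun ω : V K × V K => ω.2) f = ((2:ℝ)^K)⁻¹ := by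
  rw [prob_split _ _ (fun _ => True) (fun v => v = f) (fun ω => by simp)]
  rw [rcard_eq, rcard_true]
  field_simp

lemma probFW (f : V K) (w : V K) :
    prob (pm K) (fun ω : V K × V K => (ω.2, fun k : Fin K => ω.1 k)) (f, w)
      = ((2:ℝ)^K)⁻¹ * ((2:ℝ)^K)⁻¹ := by
  rw [prob_split _ _ (fun m => m = w) (fun v => v = f)
    (fun ω => by simp [Prod.ext_iff, and_comm])]
  rw [rcard_eq, rcard_eq]
  ring

lemma probS0 (t : V K) :
    prob (pm K) (fun ω : V K × V K => ω.1) t = ((2:ℝ)^K)⁻¹ := by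
  rw [prob_split _ _ (fun m => m = t) (fun _ => True) (fun ω => by simp)]
  rw [rcard_eq, rcard_true]
  field_simp

lemma probS1 [NeZero K] (t : V K) :
    prob (pm K) (fun ω : V K × V K => sto1 ω.1) t
      = if t 0 = 0 then 2/(2:ℝ)^K else 0 := by
  rw [prob_split _ _ (fun m => sto1 m = t) (fun _ => True) (fun ω => by simp)]
  rw [rcard_true, sto1_fiber_card]
  split_ifs
  · push_cast
    field_simp
  · push_cast
    ring

lemma probQ (k : Fin K) (n : Fin 2) (q : V K) :
    prob (pm K) (fun ω : V K × V K => qq k n ω.2) q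
      = if par q = (n.val : ZMod 2) + 1 then 2/(2:ℝ)^K else 0 := by
  rw [prob_split _ _ (fun _ => True) (fun v => qq k n v = q) (fun ω => by simp)]
  rw [rcard_true, qq_fiber_card]
  split_ifs
  · push_cast
    field_simp
  · push_cast
    ring

end ProbLayer

end ConstructionA

namespace ConstructionA

variable {K : ℕ}

lemma V_add_self (x : V K) : x + x = 0 := by
  funext j
  exact (by decide : ∀ y : ZMod 2, y + y = 0) _

lemma vec_eq_iff (k : Fin K) (q : Fin 2 → V K) (h1 : q 1 = q 0 + dlt k) (v : V K) :
    (fun n : Fin 2 => qq k n v) = q ↔ qq k 0 v = q 0 := by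
  constructor
  · intro h
    exact congrFun h 0
  · intro hv
    funext n
    fin_cases n
    · exact hv
    · show qq k 1 v = q 1
      rw [qq_zero_add_dlt, hv, ← h1]

lemma vec_eq_cond (k : Fin K) (q : Fin 2 → V K) (v : V K)
    (h : (fun n : Fin 2 => qq k n v) = q) : q 1 = q 0 + dlt k := by
  rw [← congrFun h 0, ← congrFun h 1, qq_zero_add_dlt]

lemma probQvec (k : Fin K) (q : Fin 2 → V K) :
    prob (pm K) (fun ω : V K × V K => (fun n : Fin 2 => qq k n ω.2)) q
      = if par (q 0) = 1 ∧ q 1 = q 0 + dlt k then 2/(2:ℝ)^K else 0 := by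
  by_cases h1 : q 1 = q 0 + dlt k
  · rw [prob_split _ _ (fun _ => True) (fun v => qq k 0 v = q 0)
      (fun ω => by simp [vec_eq_iff k q h1 ω.2])]
    rw [rcard_true]
    have hcard := qq_fiber_card k 0 (q 0)
    simp only [Fin.val_zero, Nat.cast_zero, zero_add] at hcard
    rw [hcard]
    by_cases hp : par (q 0) = 1
    · rw [if_pos hp, if_pos ⟨hp, h1⟩]
      push_cast
      field_simp
    · rw [if_neg hp, if_neg (by tauto)]
      push_cast
      ring
  · rw [if_neg (by tauto), prob]
    apply Finset.sum_eq_zero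
    intro ω _
    rw [if_neg]
    intro h
    exact h1 (vec_eq_cond k q ω.2 h)

lemma par_q0_ne (q : Fin 2 → V K) (hp : par (q 0) = 1) : q 0 ≠ 0 := by
  apply par_ne_zero_ne
  rw [hp]
  decide

lemma probAQ0 (k : Fin K) (b : ZMod 2) (q : Fin 2 → V K) :
    prob (pm K) (fun ω : V K × V K =>
        (dot (qq k 0 ω.2) ω.1, fun n : Fin 2 => qq k n ω.2)) (b, q)
      = if par (q 0) = 1 ∧ q 1 = q 0 + dlt k then ((2:ℝ)^K)⁻¹ else 0 := by
  by_cases hC : par (q 0) = 1 ∧ q 1 = q 0 + dlt k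
  · rw [prob_split _ _ (fun m => dot (q 0) m = b) (fun v => qq k 0 v = q 0) ?_]
    · rw [rcard_dot _ (par_q0_ne q hC.1)]
      have hcard := qq_fiber_card k 0 (q 0)
      simp only [Fin.val_zero, Nat.cast_zero, zero_add] at hcard
      rw [hcard, if_pos hC.1, if_pos hC]
      push_cast
      field_simp
      try ring
    · intro ω
      rw [Prod.mk.injEq]
      constructor
      · rintro ⟨hd, hv⟩
        have h0 : qq k 0 ω.2 = q 0 := congrFun hv 0
        refine ⟨?_, h0⟩
        rw [← h0]
        exact hd
      · rintro ⟨hm, hv⟩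
        refine ⟨by rw [hv]; exact hm, (vec_eq_iff k q hC.2 ω.2).mpr hv⟩
  · rw [if_neg hC, prob]
    apply Finset.sum_eq_zero
    intro ω _
    rw [if_neg]
    intro h
    rw [Prod.mk.injEq] at h
    apply hC
    have hv := h.2
    refine ⟨?_, vec_eq_cond k q ω.2 hv⟩
    rw [← congrFun hv 0, par_qq]
    decide

lemma probAQ1 [NeZero K] (k : Fin K) (b : ZMod 2) (q : Fin 2 → V K) :
    prob (pm K) (fun ω : V K × V K =>
        (dot (qq k 1 ω.2) (sto1 ω.1), fun n : Fin 2 => qq k n ω.2)) (b, q)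
      = if par (q 0) = 1 ∧ q 1 = q 0 + dlt k then
          (if q 0 = dlt k then (if b = 0 then 2/(2:ℝ)^K else 0) else ((2:ℝ)^K)⁻¹)
        else 0 := by
  by_cases hC : par (q 0) = 1 ∧ q 1 = q 0 + dlt k
  · have hq1par : par (q 1) = 0 := by
      rw [hC.2, par_add, par_dlt, hC.1]
      decide
    rw [prob_split _ _ (fun m => dot (q 1) m = b) (fun v => qq k 0 v = q 0) ?_]
    · have hcard := qq_fiber_card k 0 (q 0)
      simp only [Fin.val_zero, Nat.cast_zero, zero_add] at hcard
      rw [hcard, if_pos hC.1, if_pos hC]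
      by_cases hq0 : q 0 = dlt k
      · have hq1 : q 1 = 0 := by rw [hC.2, hq0, V_add_self]
        have hrw : (univ.filter (fun m : V K => dot (q 1) m = b))
            = (univ.filter (fun m : V K => (0 : ZMod 2) = b)) := by
          apply Finset.filter_congr
          intro m _
          rw [hq1]
          simp [dot]
        rw [hrw, if_pos hq0]
        rcases zmod2_cases b with hb | hb
        · subst hb
          rw [if_pos rfl]
          rw [Finset.filter_true_of_mem (fun _ _ => rfl)]
          rw [Finset.card_univ, card_V]
          push_cast
          field_simp
        · subst hb
          rw [if_neg (by decide)]
          rw [show (univ.filter (fun _ : V K => (0 : ZMod 2) = 1)) = ∅ by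
            simp]
          simp
      · have hq1ne : q 1 ≠ 0 := by
          intro h0
          apply hq0
          have : q 0 = q 0 + (dlt k + dlt k) := by rw [V_add_self, add_zero]
          rw [← add_assoc, ← hC.2, h0, zero_add] at this
          exact this
        rw [rcard_dot _ hq1ne, if_neg hq0]
        push_cast
        field_simp
        try ring
    · intro ω
      rw [Prod.mk.injEq]
      constructor
      · rintro ⟨hd, hv⟩
        have h1 : qq k 1 ω.2 = q 1 := congrFun hv 1
        have h0 : qq k 0 ω.2 = q 0 := congrFun hv 0
        refine ⟨?_, h0⟩
        rw [← hd, h1, dot_sto1, hq1par, zero_mul, zero_add]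
      · rintro ⟨hm, hv⟩
        have h1 : qq k 1 ω.2 = q 1 := by rw [qq_zero_add_dlt, hv, ← hC.2]
        constructor
        · rw [h1, dot_sto1, hq1par, zero_mul, zero_add]
          exact hm
        · exact (vec_eq_iff k q hC.2 ω.2).mpr hv
  · rw [if_neg hC, prob]
    apply Finset.sum_eq_zero
    intro ω _
    rw [if_neg]
    intro h
    rw [Prod.mk.injEq] at h
    apply hC
    have hv := h.2
    refine ⟨?_, vec_eq_cond k q ω.2 hv⟩
    rw [← congrFun hv 0, par_qq]
    decide

end ConstructionA

namespace ConstructionA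

variable {K : ℕ}

lemma log2_ne : Real.log 2 ≠ 0 := ne_of_gt (Real.log_pos (by norm_num))

lemma nml_half : Real.negMulLog (1/2 : ℝ) = Real.log 2 / 2 := by
  rw [Real.negMulLog, one_div, Real.log_inv]
  ring

lemma nml_invpow : Real.negMulLog (((2:ℝ)^K)⁻¹) = ((2:ℝ)^K)⁻¹ * ((K:ℝ) * Real.log 2) := by
  rw [Real.negMulLog, Real.log_inv, Real.log_pow]
  push_cast
  ring

lemma nml_two_div :
    Real.negMulLog (2/(2:ℝ)^K)
      = (2/(2:ℝ)^K) * ((K:ℝ) * Real.log 2 - Real.log 2) := by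
  rw [Real.negMulLog, Real.log_div (by norm_num) (two_pow_ne K), Real.log_pow]
  push_cast
  ring

lemma entW [NeZero K] (k : Fin K) :
    ent (pm K) (fun ω : V K × V K => ω.1 k) = Real.log 2 := by
  rw [ent_eq_sum_univ]
  rw [Finset.sum_congr rfl (fun a _ => by rw [probW k a, nml_half])]
  rw [Finset.sum_const, Finset.card_univ, ZMod.card, nsmul_eq_mul]
  push_cast
  ring

lemma entS0 : ent (pm K) (fun ω : V K × V K => ω.1) = (K:ℝ) * Real.log 2 := by
  rw [ent_eq_sum_univ]
  rw [Finset.sum_congr rfl (fun t _ => by rw [probS0 t, nml_invpow])]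
  rw [Finset.sum_const, Finset.card_univ, card_V, nsmul_eq_mul]
  push_cast
  field_simp

lemma entS1 [NeZero K] :
    ent (pm K) (fun ω : V K × V K => sto1 ω.1)
      = (K:ℝ) * Real.log 2 - Real.log 2 := by
  rw [ent_eq_sum_univ]
  have hterm : ∀ t : V K,
      Real.negMulLog (prob (pm K) (fun ω : V K × V K => sto1 ω.1) t)
        = if t 0 = 0 then Real.negMulLog (2/(2:ℝ)^K) else 0 := by
    intro t
    rw [probS1]
    split_ifs
    · rfl
    · exact Real.negMulLog_zero
  rw [Finset.sum_congr rfl (fun t _ => hterm t), ← Finset.sum_filter,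
    Finset.sum_const, nsmul_eq_mul, rcard_coord 0 0, nml_two_div]
  field_simp

lemma sum_qvec_if2 [NeZero K] (k : Fin K) (X Y : ℝ) :
    ∑ q : Fin 2 → V K,
        (if par (q 0) = 1 ∧ q 1 = q 0 + dlt k then
           (if q 0 = dlt k then Y else X) else 0)
      = Y + ((2:ℝ)^K/2 - 1) * X := by
  have hstep : ∀ a : V K,
      (∑ b : V K, if par a = 1 ∧ b = a + dlt k then
          (if a = dlt k then Y else X) else 0)
        = if par a = 1 then (if a = dlt k then Y else X) else 0 := by
    intro a
    by_cases hp : par a = 1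
    · simp only [hp, true_and]
      rw [Finset.sum_ite_eq' univ (a + dlt k) (fun _ => if a = dlt k then Y else X)]
      simp
    · simp [hp]
  have hequiv :
      ∑ q : Fin 2 → V K,
          (if par (q 0) = 1 ∧ q 1 = q 0 + dlt k then
             (if q 0 = dlt k then Y else X) else 0)
        = ∑ y : V K × V K,
            (if par y.1 = 1 ∧ y.2 = y.1 + dlt k then
               (if y.1 = dlt k then Y else X) else 0) := by
    apply Fintype.sum_equiv (piFinTwoEquiv (fun _ : Fin 2 => V K))
    intro q
    rfl
  rw [hequiv, Fintype.sum_prod_type]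
  rw [Finset.sum_congr rfl (fun a _ => hstep a)]
  rw [← Finset.add_sum_erase _ _ (Finset.mem_univ (dlt k))]
  rw [if_pos (par_dlt k), if_pos rfl]
  have herase : ∑ a ∈ univ.erase (dlt k),
      (if par a = 1 then (if a = dlt k then Y else X) else 0)
        = ∑ a ∈ univ.erase (dlt k), (if par a = 1 then X else 0) := by
    apply Finset.sum_congr rfl
    intro a ha
    have : a ≠ dlt k := Finset.ne_of_mem_erase ha
    simp [this]
  rw [herase, ← Finset.sum_filter, Finset.sum_const, nsmul_eq_mul,
    Finset.filter_erase, Finset.card_erase_of_mem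
      (show dlt k ∈ univ.filter (fun v : V K => par v = 1) from
        Finset.mem_filter.mpr ⟨Finset.mem_univ _, par_dlt k⟩)]
  have hpos : 1 ≤ (univ.filter (fun v : V K => par v = 1)).card :=
    Finset.card_pos.mpr ⟨dlt k, Finset.mem_filter.mpr ⟨Finset.mem_univ _, par_dlt k⟩⟩
  rw [Nat.cast_sub hpos, rcard_par]
  push_cast
  ring

lemma sum_qvec_if [NeZero K] (k : Fin K) (Y : ℝ) :
    ∑ q : Fin 2 → V K,
        (if par (q 0) = 1 ∧ q 1 = q 0 + dlt k then Y else 0)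
      = ((2:ℝ)^K/2) * Y := by
  have h := sum_qvec_if2 k Y Y
  simp only [ite_self] at h
  rw [h]
  ring

lemma entQvec [NeZero K] (k : Fin K) :
    ent (pm K) (fun ω : V K × V K => (fun n : Fin 2 => qq k n ω.2))
      = (K:ℝ) * Real.log 2 - Real.log 2 := by
  rw [ent_eq_sum_univ]
  have hterm : ∀ q : Fin 2 → V K,
      Real.negMulLog (prob (pm K)
          (fun ω : V K × V K => (fun n : Fin 2 => qq k n ω.2)) q)
        = if par (q 0) = 1 ∧ q 1 = q 0 + dlt k then
            Real.negMulLog (2/(2:ℝ)^K) else 0 := by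
    intro q
    rw [probQvec]
    split_ifs
    · rfl
    · exact Real.negMulLog_zero
  rw [Finset.sum_congr rfl (fun q _ => hterm q), sum_qvec_if, nml_two_div]
  field_simp

lemma entAQ0 [NeZero K] (k : Fin K) :
    ent (pm K) (fun ω : V K × V K =>
        (dot (qq k 0 ω.2) ω.1, fun n : Fin 2 => qq k n ω.2))
      = (K:ℝ) * Real.log 2 := by
  rw [ent_eq_sum_univ]
  have hterm : ∀ x : ZMod 2 × (Fin 2 → V K),
      Real.negMulLog (prob (pm K) (fun ω : V K × V K =>
          (dot (qq k 0 ω.2) ω.1, fun n : Fin 2 => qq k n ω.2)) x)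
        = if par (x.2 0) = 1 ∧ x.2 1 = x.2 0 + dlt k then
            Real.negMulLog (((2:ℝ)^K)⁻¹) else 0 := by
    intro x
    rw [show x = (x.1, x.2) from rfl, probAQ0]
    split_ifs
    · rfl
    · exact Real.negMulLog_zero
  rw [Finset.sum_congr rfl (fun x _ => hterm x), Fintype.sum_prod_type]
  dsimp only
  rw [Finset.sum_congr rfl (fun b _ => sum_qvec_if k _)]
  rw [Finset.sum_const, Finset.card_univ, ZMod.card, nsmul_eq_mul, nml_invpow]
  field_simp
  ring

lemma entAQ1 [NeZero K] (k : Fin K) :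
    ent (pm K) (fun ω : V K × V K =>
        (dot (qq k 1 ω.2) (sto1 ω.1), fun n : Fin 2 => qq k n ω.2))
      = Real.negMulLog (2/(2:ℝ)^K)
          + ((2:ℝ)^K - 2) * Real.negMulLog (((2:ℝ)^K)⁻¹) := by
  rw [ent_eq_sum_univ]
  have hterm : ∀ x : ZMod 2 × (Fin 2 → V K),
      Real.negMulLog (prob (pm K) (fun ω : V K × V K =>
          (dot (qq k 1 ω.2) (sto1 ω.1), fun n : Fin 2 => qq k n ω.2)) x)
        = if par (x.2 0) = 1 ∧ x.2 1 = x.2 0 + dlt k then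
            (if x.2 0 = dlt k then
               (if x.1 = 0 then Real.negMulLog (2/(2:ℝ)^K) else 0)
             else Real.negMulLog (((2:ℝ)^K)⁻¹))
          else 0 := by
    intro x
    rw [show x = (x.1, x.2) from rfl, probAQ1]
    split_ifs
    · rfl
    · exact Real.negMulLog_zero
    · rfl
    · exact Real.negMulLog_zero
  rw [Finset.sum_congr rfl (fun x _ => hterm x), Fintype.sum_prod_type]
  dsimp only
  rw [Finset.sum_congr rfl (fun b _ => sum_qvec_if2 k (Real.negMulLog (((2:ℝ)^K)⁻¹))
    (if b = 0 then Real.negMulLog (2/(2:ℝ)^K) else 0))]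
  rw [Finset.sum_add_distrib, Finset.sum_const, Finset.card_univ, ZMod.card,
    nsmul_eq_mul]
  rw [Finset.sum_ite_eq' univ (0 : ZMod 2)
    (fun _ => Real.negMulLog (2/(2:ℝ)^K)), if_pos (Finset.mem_univ _)]
  push_cast
  ring

end ConstructionA

namespace ConstructionA

/-- Construction A: the compressed two-server PIR scheme. -/
noncomputable def scheme (K : ℕ) [NeZero K] : PIRScheme 2 K where
  Ω := V K × V K
  finΩ := inferInstance
  Msg := ZMod 2
  Sto := V K
  Qry := V K
  Ans := ZMod 2
  Key := V K
  p := pm K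
  p_nonneg := fun ω => by
    show (0:ℝ) ≤ ((2:ℝ)^K)⁻¹ * ((2:ℝ)^K)⁻¹
    positivity
  p_sum := by
    show ∑ _ω : V K × V K, (((2:ℝ)^K)⁻¹ * ((2:ℝ)^K)⁻¹) = 1
    rw [Finset.sum_const, Finset.card_univ, Fintype.card_prod, card_V,
      nsmul_eq_mul]
    push_cast
    field_simp
  L := Real.log 2
  L_pos := Real.log_pos (by norm_num)
  W := fun k ω => ω.1 k
  S := fun n ω => if n = 0 then ω.1 else sto1 ω.1
  F := fun ω => ω.2
  Q := fun k n ω => qq k n ω.2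
  A := fun k n ω => dot (qq k n ω.2) (if n = 0 then ω.1 else sto1 ω.1)
  W_indep := fun w => by
    rw [probWvec]
    rw [Finset.prod_congr rfl (fun k _ => probW k (w k)), Finset.prod_const,
      Finset.card_univ, Fintype.card_fin, one_div, inv_pow]
  W_ent := fun k => entW k
  F_indep := fun f w => by
    rw [probFW, probF, probWvec]
  S_det := fun n => ⟨fun m => if n = 0 then m else sto1 m, fun ω => rfl⟩
  Q_det := fun k n => ⟨fun f => qq k n f, fun ω => rfl⟩
  A_det := fun n => ⟨fun q s => dot q s, fun k ω => rfl⟩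
  correct := fun k => ⟨fun a _ => a 0 + a 1, fun ω => by
    show ω.1 k = dot (qq k 0 ω.2) (if (0 : Fin 2) = 0 then ω.1 else sto1 ω.1)
        + dot (qq k 1 ω.2) (if (1 : Fin 2) = 0 then ω.1 else sto1 ω.1)
    rw [if_pos rfl, if_neg (by decide)]
    exact (correct_id k ω.2 ω.1).symm⟩
  privacy := fun n k k' q => by
    show prob (pm K) (fun ω : V K × V K => qq k n ω.2) q
        = prob (pm K) (fun ω : V K × V K => qq k' n ω.2) q
    rw [probQ, probQ]

lemma scheme_alpha (K : ℕ) [NeZero K] : (scheme K).alpha = (K:ℝ) - 1/2 := by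
  unfold PIRScheme.alpha
  rw [Fin.sum_univ_two]
  have e0 : ent (scheme K).p ((scheme K).S 0) = (K:ℝ) * Real.log 2 := entS0
  have e1 : ent (scheme K).p ((scheme K).S 1)
      = (K:ℝ) * Real.log 2 - Real.log 2 := entS1
  rw [e0, e1, show (scheme K).L = Real.log 2 from rfl]
  have hl := log2_ne
  push_cast
  field_simp
  ring

lemma scheme_beta (K : ℕ) [NeZero K] (k : Fin K) :
    (scheme K).betaAt k = ((2:ℝ)^K - 1) / (2:ℝ)^K := by
  unfold PIRScheme.betaAt
  rw [Fin.sum_univ_two]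
  unfold condEnt
  have hQ : ent (scheme K).p
      (fun ω => (fun n' : Fin 2 => (scheme K).Q k n' ω))
        = (K:ℝ) * Real.log 2 - Real.log 2 := entQvec k
  have h0 : ent (scheme K).p
      (fun ω => ((scheme K).A k 0 ω, fun n' : Fin 2 => (scheme K).Q k n' ω))
        = (K:ℝ) * Real.log 2 := entAQ0 k
  have h1 : ent (scheme K).p
      (fun ω => ((scheme K).A k 1 ω, fun n' : Fin 2 => (scheme K).Q k n' ω))
        = Real.negMulLog (2/(2:ℝ)^K)
            + ((2:ℝ)^K - 2) * Real.negMulLog (((2:ℝ)^K)⁻¹) := entAQ1 k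
  rw [hQ, h0, h1, show (scheme K).L = Real.log 2 from rfl, nml_two_div,
    nml_invpow]
  have hl := log2_ne
  have hp := two_pow_ne K
  push_cast
  field_simp
  ring

end ConstructionA

theorem stmt17 (K : ℕ) (hK : 1 ≤ K) :
    ∃ s : PIRScheme 2 K, s.L = Real.log 2 ∧
      s.alpha ≤ (K : ℝ) - 1 / 2 ∧
      s.betaAt ⟨0, by omega⟩ ≤ ((2 : ℝ) ^ K - 1) / 2 ^ K := by
  haveI : NeZero K := ⟨by omega⟩
  refine ⟨ConstructionA.scheme K, rfl, ?_, ?_⟩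
  · exact le_of_eq (ConstructionA.scheme_alpha K)
  · exact le_of_eq (ConstructionA.scheme_beta K _)
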